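/- arXiv:0709.0837 — 8 statements merged into one kernel-verified Lean document; each statement's English description precedes it below -/
import Mathlib

section
/- Let p: P ⥤ X be a functor between small categories, let F: Xᵒᵖ ⥤ Type be the presheaf sending x to π₀(x/p) (with action by precomposition), and let m_F: ∫F ⥤ X be the projection from the category of elements of F. Then there is a functor η: P ⥤ ∫F with m_F ∘ η = p, sending an object a to (p a, [id_{p a}]), which exhibits m_F as the reflection of p into discrete fibrations over X: for every discrete fibration n: N ⥤ X and every functor k: P ⥤ N with n ∘ k = p, there is a unique functor u: ∫F ⥤ N with n ∘ u = m_F and u ∘ η = k. -/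
open CategoryTheory CategoryTheory.Limits

universe u

/-- The discrete reflection presheaf `↓p` of a functor `p : P ⥤ X`: it sends `x` to the set
`π₀(x/p)` of connected components of the comma category `x/p`, with action given by
precomposition. -/
noncomputable def reflPresheaf {P X : Type u} [SmallCategory P] [SmallCategory X]
    (p : P ⥤ X) : Xᵒᵖ ⥤ Type u where
  obj x := ConnectedComponents (StructuredArrow x.unop p)
  map g := TypeCat.ofHom (StructuredArrow.map g.unop).mapConnectedComponents
  map_id x := by
    ext c
    obtain ⟨s, rfl⟩ := Quotient.exists_rep c
    exact Quotient.sound (Zigzag.of_hom (StructuredArrow.homMk (𝟙 s.right) (by simp)))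
  map_comp {x y z} g h := by
    ext c
    obtain ⟨s, rfl⟩ := Quotient.exists_rep c
    exact Quotient.sound (Zigzag.of_hom (StructuredArrow.homMk (𝟙 s.right) (by simp)))

/-- A functor `n : N ⥤ X` is a discrete fibration if every morphism `g : x ⟶ n b` of `X`
has a unique lifting to a morphism of `N` with codomain `b`. -/
def IsDiscreteFibration {N X : Type u} [SmallCategory N] [SmallCategory X]
    (n : N ⥤ X) : Prop :=
  ∀ (b : N) ⦃x : X⦄ (g : x ⟶ n.obj b),
    ∃! fl : Σ a : N, a ⟶ b, ∃ e : n.obj fl.1 = x, n.map fl.2 = eqToHom e ≫ g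

/-- The category of elements `∫F` of a presheaf `F : Xᵒᵖ ⥤ Type`: objects are pairs `(x, s)`
with `s ∈ F x`, morphisms `(x,s) ⟶ (x',s')` are morphisms `g : x ⟶ x'` of `X` with
`F(g)(s') = s`. -/
structure El {X : Type u} [SmallCategory X] (F : Xᵒᵖ ⥤ Type u) : Type u where
  pt : X
  elt : F.obj (Opposite.op pt)

instance {X : Type u} [SmallCategory X] (F : Xᵒᵖ ⥤ Type u) : SmallCategory (El F) where
  Hom a b := { g : a.pt ⟶ b.pt // F.map g.op b.elt = a.elt }
  id a := ⟨𝟙 a.pt, by simp⟩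
  comp {a b c} f g := ⟨f.1 ≫ g.1, by
    have : F.map (f.1 ≫ g.1).op = F.map g.1.op ≫ F.map f.1.op := by
      rw [← F.map_comp]; rfl
    simp only [this, types_comp_apply, g.2, f.2]⟩
  id_comp f := Subtype.ext (Category.id_comp f.1)
  comp_id f := Subtype.ext (Category.comp_id f.1)
  assoc f g h := Subtype.ext (Category.assoc f.1 g.1 h.1)

/-- The projection `∫F ⥤ X` (a discrete fibration). -/
def elProj {X : Type u} [SmallCategory X] (F : Xᵒᵖ ⥤ Type u) : El F ⥤ X where
  obj a := a.pt
  map f := f.1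

section Aux

variable {P X N : Type u} [SmallCategory P] [SmallCategory X] [SmallCategory N]

noncomputable def dfLift (n : N ⥤ X) (hn : IsDiscreteFibration n) (b : N) {x : X}
    (g : x ⟶ n.obj b) : Σ a : N, a ⟶ b :=
  (hn b g).exists.choose

lemma dfLift_spec (n : N ⥤ X) (hn : IsDiscreteFibration n) (b : N) {x : X}
    (g : x ⟶ n.obj b) :
    ∃ e : n.obj (dfLift n hn b g).1 = x, n.map (dfLift n hn b g).2 = eqToHom e ≫ g :=
  (hn b g).exists.choose_spec

lemma dfLift_unique (n : N ⥤ X) (hn : IsDiscreteFibration n) (b : N) {x : X}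
    (g : x ⟶ n.obj b) (fl : Σ a : N, a ⟶ b)
    (e : n.obj fl.1 = x) (he : n.map fl.2 = eqToHom e ≫ g) : fl = dfLift n hn b g :=
  (hn b g).unique ⟨e, he⟩ (dfLift_spec n hn b g)

lemma df_faithful (n : N ⥤ X) (hn : IsDiscreteFibration n) {b b' : N}
    (m m' : b ⟶ b') (h : n.map m = n.map m') : m = m' := by
  have h1 := dfLift_unique n hn b' (n.map m) ⟨b, m⟩ rfl (by simp)
  have h2 := dfLift_unique n hn b' (n.map m) ⟨b, m'⟩ rfl (by simp [h])
  have := h1.trans h2.symm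
  exact eq_of_heq (Sigma.mk.inj_iff.mp this).2

lemma nk_obj (p : P ⥤ X) (n : N ⥤ X) (hn : IsDiscreteFibration n) (k : P ⥤ N) (hk : k ⋙ n = p) (a : P) : n.obj (k.obj a) = p.obj a := Functor.congr_obj hk a

noncomputable def sLift (p : P ⥤ X) (n : N ⥤ X) (hn : IsDiscreteFibration n) (k : P ⥤ N) (hk : k ⋙ n = p) {x : X} (s : StructuredArrow x p) : Σ b : N, b ⟶ k.obj s.right :=
  dfLift n hn (k.obj s.right) (s.hom ≫ eqToHom (nk_obj p n hn k hk s.right).symm)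

lemma sLift_spec (p : P ⥤ X) (n : N ⥤ X) (hn : IsDiscreteFibration n) (k : P ⥤ N) (hk : k ⋙ n = p) {x : X} (s : StructuredArrow x p) :
    ∃ e : n.obj (sLift p n hn k hk s).1 = x,
      n.map (sLift p n hn k hk s).2 = eqToHom e ≫ s.hom ≫ eqToHom (nk_obj p n hn k hk s.right).symm :=
  dfLift_spec n hn _ _

lemma sLift_hom (p : P ⥤ X) (n : N ⥤ X) (hn : IsDiscreteFibration n) (k : P ⥤ N) (hk : k ⋙ n = p) {x : X} {s t : StructuredArrow x p} (m : s ⟶ t) :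
    (sLift p n hn k hk s).1 = (sLift p n hn k hk t).1 := by
  obtain ⟨e, he⟩ := sLift_spec p n hn k hk s
  have hu := dfLift_unique n hn (k.obj t.right)
    (t.hom ≫ eqToHom (nk_obj p n hn k hk t.right).symm)
    ⟨(sLift p n hn k hk s).1, (sLift p n hn k hk s).2 ≫ k.map m.right⟩ e ?_
  · exact congrArg Sigma.fst hu
  · have hw : s.hom ≫ p.map m.right = t.hom := StructuredArrow.w m
    have hkn := Functor.congr_hom hk m.right
    rw [Functor.map_comp, he, show n.map (k.map m.right) = (k ⋙ n).map m.right from rfl, hkn, ← hw]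
    simp

lemma sLift_zigzag (p : P ⥤ X) (n : N ⥤ X) (hn : IsDiscreteFibration n) (k : P ⥤ N) (hk : k ⋙ n = p) {x : X} {s t : StructuredArrow x p} (h : Zigzag s t) :
    (sLift p n hn k hk s).1 = (sLift p n hn k hk t).1 := by
  induction h with
  | refl => rfl
  | tail _ hz ih =>
    cases hz with
    | inl h => exact ih.trans (sLift_hom p n hn k hk h.some)
    | inr h => exact ih.trans (sLift_hom p n hn k hk h.some).symm

noncomputable def uObj (p : P ⥤ X) (n : N ⥤ X) (hn : IsDiscreteFibration n) (k : P ⥤ N) (hk : k ⋙ n = p) (e : El (reflPresheaf p)) : N :=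
  Quotient.lift (fun s => (sLift p n hn k hk s).1)
    (fun _ _ h => sLift_zigzag p n hn k hk h) e.elt

lemma uObj_over (p : P ⥤ X) (n : N ⥤ X) (hn : IsDiscreteFibration n) (k : P ⥤ N) (hk : k ⋙ n = p) (e : El (reflPresheaf p)) : n.obj (uObj p n hn k hk e) = e.pt := by
  obtain ⟨x, c⟩ := e
  obtain ⟨s, rfl⟩ := Quotient.exists_rep c
  exact (sLift_spec p n hn k hk s).choose

noncomputable def uMapAux (p : P ⥤ X) (n : N ⥤ X) (hn : IsDiscreteFibration n) (k : P ⥤ N) (hk : k ⋙ n = p) {e e' : El (reflPresheaf p)} (f : e ⟶ e') :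
    Σ b : N, b ⟶ uObj p n hn k hk e' :=
  dfLift n hn _ (f.1 ≫ eqToHom (uObj_over p n hn k hk e').symm)

lemma uMap_key (p : P ⥤ X) (n : N ⥤ X) (hn : IsDiscreteFibration n) (k : P ⥤ N)
    (hk : k ⋙ n = p) {x x' : X} (g : x ⟶ x') (s' : StructuredArrow x' p)
    (e : n.obj (sLift p n hn k hk s').1 = x') :
    (dfLift n hn (sLift p n hn k hk s').1 (g ≫ eqToHom e.symm)).1
      = (sLift p n hn k hk ((StructuredArrow.map g).obj s')).1 := by
  obtain ⟨e₀, he₀⟩ := sLift_spec p n hn k hk s'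
  obtain ⟨e₁, he₁⟩ := dfLift_spec n hn (sLift p n hn k hk s').1 (g ≫ eqToHom e.symm)
  have hu := dfLift_unique n hn (k.obj s'.right)
     (((StructuredArrow.map g).obj s').hom ≫ eqToHom (nk_obj p n hn k hk s'.right).symm)
     ⟨(dfLift n hn (sLift p n hn k hk s').1 (g ≫ eqToHom e.symm)).1,
      (dfLift n hn (sLift p n hn k hk s').1 (g ≫ eqToHom e.symm)).2 ≫ (sLift p n hn k hk s').2⟩
     e₁ ?_
  · exact congrArg Sigma.fst hu
  · show n.map (_ ≫ _) = _
    rw [Functor.map_comp, he₁, he₀]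
    show _ = eqToHom e₁ ≫ (g ≫ s'.hom) ≫ eqToHom _
    simp

lemma uMapAux_fst (p : P ⥤ X) (n : N ⥤ X) (hn : IsDiscreteFibration n) (k : P ⥤ N) (hk : k ⋙ n = p) {e e' : El (reflPresheaf p)} (f : e ⟶ e') :
    (uMapAux p n hn k hk f).1 = uObj p n hn k hk e := by
  obtain ⟨x, c⟩ := e
  obtain ⟨x', c'⟩ := e'
  obtain ⟨s', rfl⟩ := Quotient.exists_rep c'
  have h2 := f.2
  dsimp only at h2
  conv_rhs => rw [← h2]
  exact uMap_key p n hn k hk f.1 s'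
    (uObj_over p n hn k hk ⟨x', Quotient.mk _ s'⟩)

lemma uMap_spec' (p : P ⥤ X) (n : N ⥤ X) (hn : IsDiscreteFibration n) (k : P ⥤ N)
    (hk : k ⋙ n = p) {e e' : El (reflPresheaf p)} (f : e ⟶ e') :
    n.map (eqToHom (uMapAux_fst p n hn k hk f).symm ≫ (uMapAux p n hn k hk f).2)
      = eqToHom (uObj_over p n hn k hk e) ≫ f.1 ≫ eqToHom (uObj_over p n hn k hk e').symm := by
  obtain ⟨e₁, he₁⟩ := dfLift_spec n hn (uObj p n hn k hk e')
    (f.1 ≫ eqToHom (uObj_over p n hn k hk e').symm)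
  rw [Functor.map_comp, eqToHom_map, show n.map (uMapAux p n hn k hk f).2 = _ from he₁]
  simp
  exact eqToHom_trans_assoc _ _ _

noncomputable def uFun (p : P ⥤ X) (n : N ⥤ X) (hn : IsDiscreteFibration n) (k : P ⥤ N)
    (hk : k ⋙ n = p) : El (reflPresheaf p) ⥤ N where
  obj e := uObj p n hn k hk e
  map {e e'} f := eqToHom (uMapAux_fst p n hn k hk f).symm ≫ (uMapAux p n hn k hk f).2
  map_id e := by
    apply df_faithful n hn
    rw [uMap_spec' p n hn k hk,
      show ((𝟙 e : e ⟶ e) : { g : e.pt ⟶ e.pt // _ }).1 = 𝟙 e.pt from rfl]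
    simp
  map_comp {e e' e''} f g := by
    apply df_faithful n hn
    rw [uMap_spec' p n hn k hk, Functor.map_comp, uMap_spec' p n hn k hk,
      uMap_spec' p n hn k hk]
    show eqToHom _ ≫ (f.1 ≫ g.1) ≫ eqToHom _ = _
    simp

lemma uFun_spec (p : P ⥤ X) (n : N ⥤ X) (hn : IsDiscreteFibration n) (k : P ⥤ N)
    (hk : k ⋙ n = p) {e e' : El (reflPresheaf p)} (f : e ⟶ e') :
    n.map ((uFun p n hn k hk).map f)
      = eqToHom (uObj_over p n hn k hk e) ≫ f.1 ≫ eqToHom (uObj_over p n hn k hk e').symm :=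
  uMap_spec' p n hn k hk f

lemma uFun_comp (p : P ⥤ X) (n : N ⥤ X) (hn : IsDiscreteFibration n) (k : P ⥤ N)
    (hk : k ⋙ n = p) : uFun p n hn k hk ⋙ n = elProj (reflPresheaf p) := by
  exact CategoryTheory.Functor.ext (fun e => uObj_over p n hn k hk e)
    (fun e e' f => uFun_spec p n hn k hk f)

noncomputable def etaP (p : P ⥤ X) : P ⥤ El (reflPresheaf p) where
  obj a := ⟨p.obj a, Quotient.mk _ (StructuredArrow.mk (𝟙 (p.obj a)))⟩
  map {a b} f := ⟨p.map f, by
    dsimp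
    exact Quotient.sound (zigzag_symmetric.symm _ _
      (Zigzag.of_hom (StructuredArrow.homMk f (by simp))))⟩
  map_id a := Subtype.ext (by simp [CategoryStruct.id])
  map_comp f g := Subtype.ext (by simp [CategoryStruct.comp])

lemma uObj_eta (p : P ⥤ X) (n : N ⥤ X) (hn : IsDiscreteFibration n) (k : P ⥤ N)
    (hk : k ⋙ n = p) (a : P) :
    uObj p n hn k hk ((etaP p).obj a) = k.obj a := by
  have hu := dfLift_unique n hn (k.obj a)
    ((StructuredArrow.mk (𝟙 (p.obj a))).hom ≫ eqToHom (nk_obj p n hn k hk a).symm)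
    ⟨k.obj a, 𝟙 (k.obj a)⟩ (nk_obj p n hn k hk a) (by simp)
  exact (congrArg Sigma.fst hu).symm

lemma uFun_eta (p : P ⥤ X) (n : N ⥤ X) (hn : IsDiscreteFibration n) (k : P ⥤ N)
    (hk : k ⋙ n = p) : etaP p ⋙ uFun p n hn k hk = k := by
  refine CategoryTheory.Functor.ext (fun a => uObj_eta p n hn k hk a) (fun a b f => ?_)
  apply df_faithful n hn
  show n.map ((uFun p n hn k hk).map ((etaP p).map f)) = _
  rw [uFun_spec p n hn k hk]
  erw [Functor.map_comp, Functor.map_comp, eqToHom_map, eqToHom_map,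
    show n.map (k.map f) = (k ⋙ n).map f from rfl, Functor.congr_hom hk f]
  show eqToHom _ ≫ p.map f ≫ eqToHom _ = _
  simp
  rfl


lemma u_unique (p : P ⥤ X) (n : N ⥤ X) (hn : IsDiscreteFibration n) (k : P ⥤ N)
    (hk : k ⋙ n = p) (u' : El (reflPresheaf p) ⥤ N)
    (h1 : u' ⋙ n = elProj (reflPresheaf p)) (h2 : etaP p ⋙ u' = k) :
    u' = uFun p n hn k hk := by
  have hobj : ∀ e, u'.obj e = uObj p n hn k hk e := by
    rintro ⟨x, c⟩
    obtain ⟨s, rfl⟩ := Quotient.exists_rep c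
    have hφel : (reflPresheaf p).map s.hom.op ((etaP p).obj s.right).elt
        = (⟨x, Quotient.mk _ s⟩ : El (reflPresheaf p)).elt := by
      dsimp [etaP]
      exact Quotient.sound (zigzag_symmetric.symm _ _
        (Zigzag.of_hom (StructuredArrow.homMk (𝟙 s.right) (by simp))))
    have hu := dfLift_unique n hn (k.obj s.right)
      (s.hom ≫ eqToHom (nk_obj p n hn k hk s.right).symm)
      ⟨u'.obj ⟨x, Quotient.mk _ s⟩,
        u'.map (⟨s.hom, hφel⟩ : (⟨x, Quotient.mk _ s⟩ : El (reflPresheaf p)) ⟶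
          (etaP p).obj s.right) ≫ eqToHom (Functor.congr_obj h2 s.right)⟩
      (Functor.congr_obj h1 ⟨x, Quotient.mk _ s⟩) ?_
    · exact congrArg Sigma.fst hu
    · show n.map (_ ≫ _) = _
      rw [Functor.map_comp, eqToHom_map,
        show n.map (u'.map _) = (u' ⋙ n).map _ from rfl,
        Functor.congr_hom h1]
      simp [elProj]
      erw [Category.assoc, eqToHom_trans]
      rfl
  refine CategoryTheory.Functor.ext hobj (fun e e' f => ?_)
  apply df_faithful n hn
  rw [show n.map (u'.map f) = (u' ⋙ n).map f from rfl, Functor.congr_hom h1,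
    Functor.map_comp, Functor.map_comp]
  erw [eqToHom_map, eqToHom_map,
    uFun_spec p n hn k hk]
  simp [elProj]
  erw [Category.assoc, Category.assoc, eqToHom_trans_assoc, eqToHom_trans]

end Aux

/-- for a functor `p : P ⥤ X` between small categories, with `F = ↓p` the presheaf
`x ↦ π₀(x/p)` and `m_F : ∫F ⥤ X` the projection from the category of elements, there is a
functor `η : P ⥤ ∫F` with `m_F ∘ η = p`, sending `a` to `(p a, [𝟙 (p a)])`, which exhibits
`m_F` as the reflection of `p` into discrete fibrations over `X`: for every discrete fibration
`n : N ⥤ X` and functor `k : P ⥤ N` with `n ∘ k = p`, there is a unique `u : ∫F ⥤ N` with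
`n ∘ u = m_F` and `u ∘ η = k`. -/



theorem comprehensive_reflection {P X : Type u} [SmallCategory P] [SmallCategory X]
    (p : P ⥤ X) :
    ∃ η : P ⥤ El (reflPresheaf p),
      η ⋙ elProj (reflPresheaf p) = p ∧
      (∀ a : P, η.obj a =
        El.mk (p.obj a)
          (Quotient.mk (Zigzag.setoid _) (StructuredArrow.mk (𝟙 (p.obj a))))) ∧
      (∀ (N : Type u) [SmallCategory N] (n : N ⥤ X), IsDiscreteFibration n →
        ∀ k : P ⥤ N, k ⋙ n = p →
          ∃! u : El (reflPresheaf p) ⥤ N,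
            u ⋙ n = elProj (reflPresheaf p) ∧ η ⋙ u = k) := by
  refine ⟨etaP p, rfl, fun a => rfl, ?_⟩
  intro N _ n hn k hk
  exact ⟨uFun p n hn k hk, ⟨uFun_comp p n hn k hk, uFun_eta p n hn k hk⟩,
    fun u' h => u_unique p n hn k hk u' h.1 h.2⟩
end

section
/- Let (E,M) be a factorization system on a category C with terminal object 1, and let p: P → X be a morphism and x: 1 → X a point with ↓p ≅ ν(x) in C/X (x is the absolute colimit of p). Then for every morphism f: X → Y, ↓(f ∘ p) ≅ ν(f ∘ x) in C/Y, i.e. f ∘ x is the absolute colimit of f ∘ p. -/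
open CategoryTheory CategoryTheory.Limits

universe v u

/-- `e ⊥ m`: every commutative square from `e` to `m` has a unique diagonal filler. -/
def IsOrth {C : Type u} [Category.{v} C] {A B M N : C} (e : A ⟶ B) (m : M ⟶ N) : Prop :=
  ∀ (u : A ⟶ M) (v : B ⟶ N), e ≫ v = u ≫ m →
    ∃! w : B ⟶ M, e ≫ w = u ∧ w ≫ m = v

/-- `^⊥M`: the class of morphisms left-orthogonal to every morphism in `M`. -/
def leftOrth {C : Type u} [Category.{v} C] (M : MorphismProperty C) : MorphismProperty C :=
  fun _ _ e => ∀ ⦃M₀ N : C⦄ (m : M₀ ⟶ N), M m → IsOrth e m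

/-- `E^⊥`: the class of morphisms right-orthogonal to every morphism in `E`. -/
def rightOrth {C : Type u} [Category.{v} C] (E : MorphismProperty C) : MorphismProperty C :=
  fun _ _ m => ∀ ⦃A B : C⦄ (e : A ⟶ B), E e → IsOrth e m

/-- A pre-factorization system: a pair of classes `(E, M)` with `E = ^⊥M` and `M = E^⊥`. -/
structure PreFactorizationSystem (C : Type u) [Category.{v} C] where
  E : MorphismProperty C
  M : MorphismProperty C
  E_eq : E = leftOrth M
  M_eq : M = rightOrth E


/-- A factorization system with a chosen `(E,M)`-factorization `f = η f ≫ refl f` of every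
morphism; `refl f` is the discrete reflection `↓f` of `f`. -/
structure FactorizationData (C : Type u) [Category.{v} C] extends PreFactorizationSystem C where
  mid : ∀ {A B : C}, (A ⟶ B) → C
  eta : ∀ {A B : C} (f : A ⟶ B), A ⟶ mid f
  refl : ∀ {A B : C} (f : A ⟶ B), mid f ⟶ B
  eta_mem : ∀ {A B : C} (f : A ⟶ B), E (eta f)
  refl_mem : ∀ {A B : C} (f : A ⟶ B), M (refl f)
  fac : ∀ {A B : C} (f : A ⟶ B), eta f ≫ refl f = f

variable {C : Type u} [Category.{v} C]

/-- A cone with base `m : M₀ ⟶ X` and vertex the point `x : 1 ⟶ X` is a morphism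
`lam : m ⟶ ν(x)` over `X`, where `ν(x) = ↓x` is the neighborhood of `x`. -/
def IsCone [HasTerminal C] (D : FactorizationData C) {M₀ X : C} (m : M₀ ⟶ X)
    (x : ⊤_ C ⟶ X) (lam : M₀ ⟶ D.mid x) : Prop :=
  lam ≫ D.refl x = m

/-- A cone `lam : m ⟶ ν(x)` is colimiting if every cone `mu : m ⟶ ν(y)` factors uniquely
through it via a morphism `ν(x) ⟶ ν(y)` over `X`; then `x` is the colimit of `m`. -/
def IsColimiting [HasTerminal C] (D : FactorizationData C) {M₀ X : C} (m : M₀ ⟶ X)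
    (x : ⊤_ C ⟶ X) (lam : M₀ ⟶ D.mid x) : Prop :=
  ∀ (y : ⊤_ C ⟶ X) (mu : M₀ ⟶ D.mid y), IsCone D m y mu →
    ∃! θ : D.mid x ⟶ D.mid y, θ ≫ D.refl y = D.refl x ∧ lam ≫ θ = mu

lemma iso_mem_E (D : FactorizationData C) {A B : C} (e : A ⟶ B) [IsIso e] : D.E e := by
  rw [D.E_eq]
  intro M₀ N m _ u v huv
  refine ⟨inv e ≫ u, ⟨by simp, by rw [Category.assoc, ← huv]; simp⟩, ?_⟩
  rintro w ⟨hw1, _⟩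
  rw [← hw1]; simp

lemma E_comp (D : FactorizationData C) {A B B' : C} {e : A ⟶ B} {e' : B ⟶ B'}
    (he : D.E e) (he' : D.E e') : D.E (e ≫ e') := by
  rw [D.E_eq] at he he' ⊢
  intro M₀ N m hm u v huv
  obtain ⟨w₁, ⟨hw₁₁, hw₁₂⟩, hw₁u⟩ := he m hm u (e' ≫ v) (by
    rw [← Category.assoc, ← huv, Category.assoc])
  obtain ⟨w, ⟨hw1, hw2⟩, hwu⟩ := he' m hm w₁ v (by rw [hw₁₂])
  refine ⟨w, ⟨by rw [Category.assoc, hw1, hw₁₁], hw2⟩, ?_⟩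
  rintro w' ⟨hw'1, hw'2⟩
  have h1 : e' ≫ w' = w₁ := by
    refine hw₁u _ ⟨by rw [← Category.assoc, ← hw'1], by rw [Category.assoc, hw'2]⟩
  exact hwu _ ⟨h1, hw'2⟩

lemma unique_fac (D : FactorizationData C) {A B M₁ M₂ : C}
    (e₁ : A ⟶ M₁) (m₁ : M₁ ⟶ B) (e₂ : A ⟶ M₂) (m₂ : M₂ ⟶ B)
    (he₁ : D.E e₁) (hm₁ : D.M m₁) (he₂ : D.E e₂) (hm₂ : D.M m₂)
    (hcomm : e₁ ≫ m₁ = e₂ ≫ m₂) :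
    ∃ φ : M₁ ≅ M₂, φ.hom ≫ m₂ = m₁ := by
  rw [D.E_eq] at he₁ he₂
  obtain ⟨φ, ⟨hφ1, hφ2⟩, -⟩ := he₁ m₂ hm₂ e₂ m₁ hcomm
  obtain ⟨ψ, ⟨hψ1, hψ2⟩, -⟩ := he₂ m₁ hm₁ e₁ m₂ hcomm.symm
  have hfill := he₁ m₁ hm₁ e₁ m₁ rfl
  obtain ⟨w0, -, huniq⟩ := hfill
  have hφψ : φ ≫ ψ = 𝟙 M₁ := by
    have h1 := huniq (φ ≫ ψ) ⟨by rw [← Category.assoc, hφ1, hψ1],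
      by rw [Category.assoc, hψ2, hφ2]⟩
    have h2 := huniq (𝟙 M₁) ⟨Category.comp_id _, Category.id_comp _⟩
    rw [h1, h2]
  have hfill' := he₂ m₂ hm₂ e₂ m₂ rfl
  obtain ⟨w0', -, huniq'⟩ := hfill'
  have hψφ : ψ ≫ φ = 𝟙 M₂ := by
    have h1 := huniq' (ψ ≫ φ) ⟨by rw [← Category.assoc, hψ1, hφ1],
      by rw [Category.assoc, hφ2, hψ2]⟩
    have h2 := huniq' (𝟙 M₂) ⟨Category.comp_id _, Category.id_comp _⟩
    rw [h1, h2]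
  exact ⟨⟨φ, ψ, hφψ, hψφ⟩, hφ2⟩

/-- if `x` is the absolute colimit of `p : P ⟶ X` (`↓p ≅ ν(x)` in `C/X`), then
for every `f : X ⟶ Y`, `f ∘ x` is the absolute colimit of `f ∘ p` (`↓(f∘p) ≅ ν(f∘x)` in `C/Y`). -/
theorem absolute_colimit_preserved [HasTerminal C] (D : FactorizationData C)
    {X P : C} (p : P ⟶ X) (x : ⊤_ C ⟶ X)
    (h : Nonempty ((Over.mk (D.refl p) : Over X) ≅ Over.mk (D.refl x)))
    {Y : C} (f : X ⟶ Y) :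
    Nonempty ((Over.mk (D.refl (p ≫ f)) : Over Y) ≅ Over.mk (D.refl (x ≫ f))) := by
  obtain ⟨ι⟩ := h
  -- the underlying iso in C between mid p and mid x, over X
  let ιC : D.mid p ≅ D.mid x := (Over.forget X).mapIso ι
  have hι : ιC.hom ≫ D.refl x = D.refl p := Over.w ι.hom
  -- factorization of p ≫ f through mid (refl x ≫ f)
  have hE₁ : D.E (D.eta p ≫ ιC.hom ≫ D.eta (D.refl x ≫ f)) :=
    E_comp D (D.eta_mem p) (E_comp D (iso_mem_E D ιC.hom) (D.eta_mem _))
  have hc₁ : D.eta (p ≫ f) ≫ D.refl (p ≫ f)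
      = (D.eta p ≫ ιC.hom ≫ D.eta (D.refl x ≫ f)) ≫ D.refl (D.refl x ≫ f) := by
    rw [D.fac]
    slice_rhs 3 4 => rw [D.fac]
    slice_rhs 2 3 => rw [hι]
    slice_rhs 1 2 => rw [D.fac]
  obtain ⟨φ₁, hφ₁⟩ := unique_fac D _ _ _ _ (D.eta_mem (p ≫ f)) (D.refl_mem (p ≫ f))
    hE₁ (D.refl_mem _) hc₁
  -- factorization of x ≫ f through mid (refl x ≫ f)
  have hE₂ : D.E (D.eta x ≫ D.eta (D.refl x ≫ f)) :=
    E_comp D (D.eta_mem x) (D.eta_mem _)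
  have hc₂ : D.eta (x ≫ f) ≫ D.refl (x ≫ f)
      = (D.eta x ≫ D.eta (D.refl x ≫ f)) ≫ D.refl (D.refl x ≫ f) := by
    rw [D.fac]
    slice_rhs 2 3 => rw [D.fac]
    slice_rhs 1 2 => rw [D.fac]
  obtain ⟨φ₂, hφ₂⟩ := unique_fac D _ _ _ _ (D.eta_mem (x ≫ f)) (D.refl_mem (x ≫ f))
    hE₂ (D.refl_mem _) hc₂
  refine ⟨Over.isoMk (φ₁ ≪≫ φ₂.symm) ?_⟩
  have : φ₂.inv ≫ D.refl (x ≫ f) = D.refl (D.refl x ≫ f) := by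
    rw [← hφ₂, ← Category.assoc, φ₂.inv_hom_id, Category.id_comp]
  simp only [Over.mk_hom, Iso.trans_hom, Iso.symm_hom, Category.assoc]
  rw [this, hφ₁]
end

section
/- Let (E,M) be a factorization system on a category C with terminal object 1, let e: P → X be a morphism in E, let x: 1 → X be a point, and let λ: ↓e → ν(x) be a colimiting cone. Then λ is an isomorphism in C/X; consequently ν(x) is an isomorphism of C (so x is a final point, x ∈ E) and x is the absolute colimit of e. -/
open CategoryTheory CategoryTheory.Limits

universe v u

variable {C : Type u} [Category.{v} C]

/-- if `e : P ⟶ X` is in `E` and `lam : ↓e ⟶ ν(x)` is a colimiting cone, then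
`lam` is an isomorphism in `C/X`; consequently `ν(x)` is an isomorphism of `C` (so `x` is a
final point, `x ∈ E`) and `x` is the absolute colimit of `e`. -/
theorem colimit_of_final_is_final_point [HasTerminal C] (D : FactorizationData C)
    {P X : C} (e : P ⟶ X) (he : D.E e) (x : ⊤_ C ⟶ X) (lam : D.mid e ⟶ D.mid x)
    (hcone : IsCone D (D.refl e) x lam) (hcolim : IsColimiting D (D.refl e) x lam) :
    IsIso lam ∧ IsIso (D.refl x) ∧ D.E x ∧
      Nonempty ((Over.mk (D.refl e) : Over X) ≅ Over.mk (D.refl x)) := by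
  have hcone' : lam ≫ D.refl x = D.refl e := hcone
  -- refl e is an iso, via orthogonality
  have hM : rightOrth D.E (D.refl e) := D.M_eq ▸ D.refl_mem e
  obtain ⟨w, ⟨hw1, hw2⟩, _⟩ := hM e he (D.eta e) (𝟙 X)
    (by rw [Category.comp_id]; exact (D.fac e).symm)
  have hwe : D.refl e ≫ w = 𝟙 _ := by
    obtain ⟨z, _, hzu⟩ := hM (D.eta e) (D.eta_mem e) (D.eta e) (D.refl e) rfl
    have h1 := hzu (D.refl e ≫ w)
      ⟨by rw [← Category.assoc, D.fac, hw1], by rw [Category.assoc, hw2, Category.comp_id]⟩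
    have h2 := hzu (𝟙 _) ⟨Category.comp_id _, Category.id_comp _⟩
    rw [h1, h2]
  -- lam is an iso
  set r : D.mid x ⟶ D.mid e := D.refl x ≫ w with hr
  have hlr : lam ≫ r = 𝟙 _ := by rw [hr, ← Category.assoc, hcone', hwe]
  obtain ⟨θ, _, hθu⟩ := hcolim x lam hcone
  have h1 := hθu (r ≫ lam)
    ⟨by rw [Category.assoc, hcone', hr, Category.assoc, hw2, Category.comp_id],
     by rw [← Category.assoc, hlr, Category.id_comp]⟩
  have h2 := hθu (𝟙 _) ⟨Category.id_comp _, Category.comp_id _⟩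
  have hrl : r ≫ lam = 𝟙 _ := by rw [h1, h2]
  have hIlam : IsIso lam := ⟨r, hlr, hrl⟩
  have hIre : IsIso (D.refl e) := ⟨w, hwe, hw2⟩
  refine ⟨hIlam, ?_, ?_, ?_⟩
  · have : IsIso (lam ≫ D.refl x) := hcone' ▸ (inferInstance : IsIso (D.refl e))
    exact IsIso.of_isIso_comp_left lam (D.refl x)
  · -- x ∈ E
    have hIrx : IsIso (D.refl x) := by
      have : IsIso (lam ≫ D.refl x) := hcone' ▸ (inferInstance : IsIso (D.refl e))
      exact IsIso.of_isIso_comp_left lam (D.refl x)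
    rw [D.E_eq]
    intro M₀ N m hm u v hsq
    have hE : leftOrth D.M (D.eta x) := D.E_eq ▸ D.eta_mem x
    obtain ⟨w', ⟨hw'1, hw'2⟩, hw'u⟩ := hE m hm u (D.refl x ≫ v)
      (by rw [← Category.assoc, D.fac, hsq])
    refine ⟨inv (D.refl x) ≫ w', ⟨?_, ?_⟩, ?_⟩
    · have hx : x ≫ inv (D.refl x) = D.eta x := by
        rw [IsIso.comp_inv_eq]; exact (D.fac x).symm
      rw [← Category.assoc, hx, hw'1]
    · rw [Category.assoc, hw'2, ← Category.assoc, IsIso.inv_hom_id, Category.id_comp]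
    · intro w₂ ⟨hw₂1, hw₂2⟩
      have := hw'u (D.refl x ≫ w₂)
        ⟨by rw [← Category.assoc, D.fac]; exact hw₂1,
         by rw [Category.assoc, hw₂2]⟩
      rw [← this, ← Category.assoc, IsIso.inv_hom_id, Category.id_comp]
  · exact ⟨Over.isoMk (asIso lam) (by simpa using hcone')⟩
end

section
/- Let (E,M) be a factorization system on a category C with terminal object 1, and let X be an object of C. Then X has a final point (a point x: 1 → X with x ∈ E) if and only if there exist a morphism e: P → X in E, a point x: 1 → X and a colimiting cone λ: ↓e → ν(x) (i.e. some final map into X has a colimit). -/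
open CategoryTheory CategoryTheory.Limits

universe v u

variable {C : Type u} [Category.{v} C]

/-- a space `X` has a final point (a point `x : 1 ⟶ X` with `x ∈ E`) iff some
final map into `X` has a colimit, i.e. there are `e : P ⟶ X` in `E`, a point `x : 1 ⟶ X` and
a colimiting cone `lam : ↓e ⟶ ν(x)`. -/
theorem final_point_iff_final_map_has_colimit [HasTerminal C] (D : FactorizationData C)
    (X : C) :
    (∃ x : ⊤_ C ⟶ X, D.E x) ↔
      ∃ (P : C) (e : P ⟶ X) (x : ⊤_ C ⟶ X) (lam : D.mid e ⟶ D.mid x),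
        D.E e ∧ IsCone D (D.refl e) x lam ∧ IsColimiting D (D.refl e) x lam := by
  constructor
  · rintro ⟨x, hx⟩
    refine ⟨⊤_ C, x, x, 𝟙 _, hx, Category.id_comp _, ?_⟩
    intro y mu hmu
    exact ⟨mu, ⟨hmu, Category.id_comp _⟩, fun θ hθ => (Category.id_comp θ).symm.trans hθ.2⟩
  · rintro ⟨P, e, x, lam, he, hcone, hcolim⟩
    -- e ⊥ refl e gives a section w of refl e
    have horth : IsOrth e (D.refl e) := by
      have := he
      rw [D.E_eq] at this
      exact this (D.refl e) (D.refl_mem e)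
    obtain ⟨w, ⟨hw1, hw2⟩, -⟩ := horth (D.eta e) (𝟙 X) (by simp [D.fac e])
    -- η e ⊥ refl e gives refl e ≫ w = 𝟙
    have horth' : IsOrth (D.eta e) (D.refl e) := by
      have := D.eta_mem e
      rw [D.E_eq] at this
      exact this (D.refl e) (D.refl_mem e)
    obtain ⟨θ₀, -, hθ₀u⟩ := horth' (D.eta e) (D.refl e) rfl
    have hrw : D.refl e ≫ w = 𝟙 _ := by
      have h1 : θ₀ = D.refl e ≫ w := by
        refine (hθ₀u _ ⟨?_, ?_⟩).symm
        · rw [← Category.assoc, D.fac e, hw1]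
        · rw [Category.assoc, hw2, Category.comp_id]
      have h2 : θ₀ = 𝟙 _ := by
        refine (hθ₀u _ ⟨?_, ?_⟩).symm <;> simp
      rw [← h1, h2]
    -- section s of refl x
    set s := w ≫ lam with hs
    have hs1 : s ≫ D.refl x = 𝟙 X := by
      rw [hs, Category.assoc, hcone, hw2]
    have hs2 : D.refl x ≫ s = 𝟙 _ := by
      obtain ⟨θ, -, hθu⟩ := hcolim x lam hcone
      have h1 : θ = D.refl x ≫ s := by
        refine (hθu _ ⟨?_, ?_⟩).symm
        · rw [Category.assoc, hs1, Category.comp_id]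
        · rw [hs, ← Category.assoc, ← Category.assoc, hcone, hrw, Category.id_comp]
      have h2 : θ = 𝟙 _ := by
        refine (hθu _ ⟨?_, ?_⟩).symm <;> simp
      rw [← h1, h2]
    -- x ∈ E
    refine ⟨x, ?_⟩
    rw [D.E_eq]
    intro M₀ N m hm u v hsq
    have hox : IsOrth (D.eta x) m := by
      have := D.eta_mem x
      rw [D.E_eq] at this
      exact this m hm
    obtain ⟨w', ⟨hw'1, hw'2⟩, hw'u⟩ := hox u (D.refl x ≫ v) (by
      rw [← Category.assoc, D.fac x, hsq])
    refine ⟨s ≫ w', ⟨?_, ?_⟩, ?_⟩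
    · have : x ≫ s ≫ w' = (D.eta x ≫ D.refl x) ≫ s ≫ w' := by rw [D.fac x]
      rw [this, Category.assoc, ← Category.assoc (D.refl x), hs2, Category.id_comp, hw'1]
    · rw [Category.assoc, hw'2, ← Category.assoc, hs1, Category.id_comp]
    · intro w'' ⟨h1, h2⟩
      have : D.refl x ≫ w'' = w' := by
        refine hw'u _ ⟨?_, ?_⟩
        · rw [← Category.assoc, D.fac x, h1]
        · rw [Category.assoc, h2]
      rw [← this, ← Category.assoc, hs1, Category.id_comp]
end

section
/- Let (E,M) be a factorization system on a finitely complete category C with terminal object 1, let f: X → Y be a morphism and y: 1 → Y a point. Then there exists a universal displacement from f to y (a point e: 1 → f*N_y of the total of the pullback Δ_f ν(y) with e ∈ E) if and only if there exist a point x: 1 → X and a colimiting cone λ: Δ_f ν(y) → ν(x) such that the image cone ∃_f λ: ∃_f(Δ_f ν(y)) → ν(f ∘ x) is also colimiting. -/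
open CategoryTheory CategoryTheory.Limits

universe v u

variable {C : Type u} [Category.{v} C]

/-- The unique diagonal filler of a square from a morphism in `E` to a morphism in `M`. -/
noncomputable def fill (D : FactorizationData C) {A B M₀ N : C} {e : A ⟶ B} {m : M₀ ⟶ N}
    (he : D.E e) (hm : D.M m) (u : A ⟶ M₀) (v : B ⟶ N) (h : e ≫ v = u ≫ m) : B ⟶ M₀ :=
  (((D.E_eq ▸ he : leftOrth D.M e) m hm u v h).exists).choose

lemma fill_spec (D : FactorizationData C) {A B M₀ N : C} {e : A ⟶ B} {m : M₀ ⟶ N}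
    (he : D.E e) (hm : D.M m) (u : A ⟶ M₀) (v : B ⟶ N) (h : e ≫ v = u ≫ m) :
    e ≫ fill D he hm u v h = u ∧ fill D he hm u v h ≫ m = v :=
  (((D.E_eq ▸ he : leftOrth D.M e) m hm u v h).exists).choose_spec

/-- The canonical comparison `∃_f ν(x) ≅ ν(f ∘ x)`: the map `↓x ⟶ ↓(f ∘ x)` over `f`. -/
noncomputable def canMap (D : FactorizationData C) {A X Y : C} (x : A ⟶ X) (f : X ⟶ Y) :
    D.mid x ⟶ D.mid (x ≫ f) :=
  fill D (D.eta_mem x) (D.refl_mem (x ≫ f)) (D.eta (x ≫ f)) (D.refl x ≫ f)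
    (by rw [← Category.assoc, D.fac, D.fac])

lemma canMap_comm (D : FactorizationData C) {A X Y : C} (x : A ⟶ X) (f : X ⟶ Y) :
    canMap D x f ≫ D.refl (x ≫ f) = D.refl x ≫ f :=
  (fill_spec D _ _ _ _ _).2

/-- The image cone `∃_f lam : ∃_f m ⟶ ν(f ∘ x)` of a cone `lam : m ⟶ ν(x)` along `f : X ⟶ Y`,
where `∃_f m = ↓(f ∘ m)`; it is obtained by functoriality of the reflection `↓(f ∘ -)` and the
canonical isomorphism `∃_f ν(x) ≅ ν(f ∘ x)`. -/
noncomputable def imageCone [HasTerminal C] (D : FactorizationData C) {M₀ X Y : C}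
    (f : X ⟶ Y) (m : M₀ ⟶ X) (x : ⊤_ C ⟶ X) (lam : M₀ ⟶ D.mid x)
    (hc : IsCone D m x lam) : D.mid (m ≫ f) ⟶ D.mid (x ≫ f) :=
  fill D (D.eta_mem (m ≫ f)) (D.refl_mem (x ≫ f)) (lam ≫ canMap D x f) (D.refl (m ≫ f))
    (by rw [D.fac, Category.assoc, canMap_comm, ← Category.assoc, hc])

/-- Orthogonality of an `E`-map against an `M`-map. -/
lemma mem_E_orth (D : FactorizationData C) {A B M₀ N : C} {e : A ⟶ B} {m : M₀ ⟶ N}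
    (he : D.E e) (hm : D.M m) : IsOrth e m :=
  (D.E_eq ▸ he : leftOrth D.M e) m hm

/-- Uniqueness of diagonal fillers. -/
lemma orth_unique (D : FactorizationData C) {A B M₀ N : C} {e : A ⟶ B} {m : M₀ ⟶ N}
    (he : D.E e) (hm : D.M m) {w₁ w₂ : B ⟶ M₀}
    (h1 : e ≫ w₁ = e ≫ w₂) (h2 : w₁ ≫ m = w₂ ≫ m) : w₁ = w₂ := by
  obtain ⟨w, -, huniq⟩ := mem_E_orth D he hm (e ≫ w₁) (w₁ ≫ m) (by rw [Category.assoc])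
  rw [huniq w₁ ⟨rfl, rfl⟩, huniq w₂ ⟨h1.symm, h2.symm⟩]

/-- `E` is closed under composition. -/
lemma E_comp_s13 (D : FactorizationData C) {A B B' : C} {a : A ⟶ B} {b : B ⟶ B'}
    (ha : D.E a) (hb : D.E b) : D.E (a ≫ b) := by
  rw [D.E_eq]
  intro M₀ N m' hm' u v hsq
  obtain ⟨w₁, ⟨hw11, hw12⟩, hu1⟩ := mem_E_orth D ha hm' u (b ≫ v)
    (by rw [← Category.assoc]; exact hsq)
  obtain ⟨w₂, ⟨hw21, hw22⟩, hu2⟩ := mem_E_orth D hb hm' w₁ v hw12.symm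
  refine ⟨w₂, ⟨by rw [Category.assoc, hw21, hw11], hw22⟩, ?_⟩
  intro w' hw'
  have hbw : b ≫ w' = w₁ := hu1 (b ≫ w')
    ⟨by rw [← Category.assoc]; exact hw'.1, by rw [Category.assoc, hw'.2]⟩
  exact hu2 w' ⟨hbw, hw'.2⟩

/-- Any map with a two-sided inverse lies in `E`. -/
lemma E_of_inv (D : FactorizationData C) {A B : C} (k : A ⟶ B) (l : B ⟶ A)
    (hkl : k ≫ l = 𝟙 A) (hlk : l ≫ k = 𝟙 B) : D.E k := by
  rw [D.E_eq]
  intro M₀ N m' hm' u v hsq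
  refine ⟨l ≫ u, ⟨?_, ?_⟩, ?_⟩
  · rw [← Category.assoc, hkl, Category.id_comp]
  · rw [Category.assoc, ← hsq, ← Category.assoc, hlk, Category.id_comp]
  · intro w hw
    rw [← hw.1, ← Category.assoc, hlk, Category.id_comp]

lemma canMap_eta (D : FactorizationData C) {A X Y : C} (x : A ⟶ X) (f : X ⟶ Y) :
    D.eta x ≫ canMap D x f = D.eta (x ≫ f) :=
  (fill_spec D _ _ _ _ _).1

lemma imageCone_spec [HasTerminal C] (D : FactorizationData C) {M₀ X Y : C}
    (f : X ⟶ Y) (m : M₀ ⟶ X) (x : ⊤_ C ⟶ X) (lam : M₀ ⟶ D.mid x)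
    (hc : IsCone D m x lam) :
    D.eta (m ≫ f) ≫ imageCone D f m x lam hc = lam ≫ canMap D x f ∧
      imageCone D f m x lam hc ≫ D.refl (x ≫ f) = D.refl (m ≫ f) :=
  fill_spec D _ _ _ _ _

/-- If `e : 1 ⟶ P` lies in `E` and `g : P ⟶ Z`, then `x := e ≫ g` is the colimit of the
discrete reflection `↓g`, via any comparison map `psi : ↓g ⟶ ν(x)` induced by orthogonality. -/
lemma colimiting_of_E_point_base [HasTerminal C] (D : FactorizationData C) {P Z : C}
    {e : ⊤_ C ⟶ P} (he : D.E e) (g : P ⟶ Z) {x : ⊤_ C ⟶ Z} (hx : e ≫ g = x)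
    (psi : D.mid g ⟶ D.mid x)
    (hpsi1 : (e ≫ D.eta g) ≫ psi = D.eta x) (hpsi2 : psi ≫ D.refl x = D.refl g) :
    IsColimiting D (D.refl g) x psi := by
  intro z mu hmu
  have hmu' : mu ≫ D.refl z = D.refl g := hmu
  have hsq : D.eta x ≫ D.refl x = (e ≫ D.eta g ≫ mu) ≫ D.refl z := by
    rw [D.fac, ← hx, Category.assoc, Category.assoc, hmu', D.fac]
  have hθ := fill_spec D (D.eta_mem x) (D.refl_mem z) (e ≫ D.eta g ≫ mu) (D.refl x) hsq
  set θ := fill D (D.eta_mem x) (D.refl_mem z) (e ≫ D.eta g ≫ mu) (D.refl x) hsq with hθdef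
  refine ⟨θ, ⟨hθ.2, ?_⟩, ?_⟩
  · -- psi ≫ θ = mu
    apply orth_unique D (E_comp_s13 D he (D.eta_mem g)) (D.refl_mem z)
    · rw [← Category.assoc, hpsi1, hθ.1, Category.assoc]
    · rw [Category.assoc, hθ.2, hpsi2, hmu']
  · intro θ' hθ'
    apply orth_unique D (D.eta_mem x) (D.refl_mem z)
    · rw [hθ.1, ← hpsi1, Category.assoc, hθ'.2, Category.assoc]
    · rw [hθ'.1, hθ.2]

/-- If `e : 1 ⟶ P` lies in `E` and `g : P ⟶ Z`, then `x := e ≫ g` is the colimit of `g`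
itself, with cone `η_g ≫ psi`. -/
lemma colimiting_of_E_point_total [HasTerminal C] (D : FactorizationData C) {P Z : C}
    {e : ⊤_ C ⟶ P} (he : D.E e) (g : P ⟶ Z) {x : ⊤_ C ⟶ Z} (hx : e ≫ g = x)
    (psi : D.mid g ⟶ D.mid x)
    (hpsi1 : (e ≫ D.eta g) ≫ psi = D.eta x) (hpsi2 : psi ≫ D.refl x = D.refl g) :
    IsColimiting D g x (D.eta g ≫ psi) := by
  intro z mu hmu
  have hmu' : mu ≫ D.refl z = g := hmu
  have hsq1 : D.eta g ≫ D.refl g = mu ≫ D.refl z := by rw [D.fac, hmu']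
  have hθ₁ := fill_spec D (D.eta_mem g) (D.refl_mem z) mu (D.refl g) hsq1
  set θ₁ := fill D (D.eta_mem g) (D.refl_mem z) mu (D.refl g) hsq1 with hθ₁def
  obtain ⟨θ, ⟨ht1, ht2⟩, huniq⟩ :=
    colimiting_of_E_point_base D he g hx psi hpsi1 hpsi2 z θ₁ hθ₁.2
  refine ⟨θ, ⟨ht1, by rw [Category.assoc, ht2, hθ₁.1]⟩, ?_⟩
  intro θ' hθ'
  apply huniq
  refine ⟨hθ'.1, ?_⟩
  apply orth_unique D (D.eta_mem g) (D.refl_mem z)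
  · rw [← Category.assoc, hθ'.2, hθ₁.1]
  · rw [Category.assoc, hθ'.1, hpsi2, hθ₁.2]

/-- given `f : X ⟶ Y` and a point `y : 1 ⟶ Y`, there is a universal displacement
from `f` to `y` (a point of the total of the pullback `Δ_f ν(y)` lying in `E`) iff the discrete
space `Δ_f ν(y)` over `X` has a colimit which is preserved by `f` itself (the image cone
`∃_f lam` is also colimiting). -/
theorem universal_displacement_iff_preserved_colimit
    [HasFiniteLimits C] (D : FactorizationData C)
    {X Y : C} (f : X ⟶ Y) (y : ⊤_ C ⟶ Y) :
    (∃ e : ⊤_ C ⟶ pullback f (D.refl y), D.E e) ↔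
      ∃ (x : ⊤_ C ⟶ X) (lam : pullback f (D.refl y) ⟶ D.mid x)
        (hc : IsCone D (pullback.fst f (D.refl y)) x lam),
        IsColimiting D (pullback.fst f (D.refl y)) x lam ∧
        IsColimiting D (D.refl (pullback.fst f (D.refl y) ≫ f)) (x ≫ f)
          (imageCone D f (pullback.fst f (D.refl y)) x lam hc) := by
  constructor
  · rintro ⟨e, he⟩
    set m : pullback f (D.refl y) ⟶ X := pullback.fst f (D.refl y) with hm
    have hsqψ : (e ≫ D.eta m) ≫ D.refl m = D.eta (e ≫ m) ≫ D.refl (e ≫ m) := by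
      rw [Category.assoc, D.fac, D.fac]
    have hψ := fill_spec D (E_comp_s13 D he (D.eta_mem m)) (D.refl_mem (e ≫ m))
      (D.eta (e ≫ m)) (D.refl m) hsqψ
    set psi := fill D (E_comp_s13 D he (D.eta_mem m)) (D.refl_mem (e ≫ m))
      (D.eta (e ≫ m)) (D.refl m) hsqψ with hpsidef
    have hc : IsCone D m (e ≫ m) (D.eta m ≫ psi) := by
      show (D.eta m ≫ psi) ≫ D.refl (e ≫ m) = m
      rw [Category.assoc, hψ.2, D.fac]
    refine ⟨e ≫ m, D.eta m ≫ psi, hc,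
      colimiting_of_E_point_total D he m rfl psi hψ.1 hψ.2, ?_⟩
    have hι := imageCone_spec D f m (e ≫ m) (D.eta m ≫ psi) hc
    apply colimiting_of_E_point_base D he (m ≫ f)
      ((Category.assoc e m f).symm) (imageCone D f m (e ≫ m) (D.eta m ≫ psi) hc) ?_ hι.2
    conv_lhs => rw [Category.assoc, hι.1, ← Category.assoc, ← Category.assoc, hψ.1]
    exact canMap_eta D (e ≫ m) f
  · rintro ⟨x, lam, hc, h1, h2⟩
    set m : pullback f (D.refl y) ⟶ X := pullback.fst f (D.refl y) with hm
    have hc' : lam ≫ D.refl x = m := hc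
    have hcond : m ≫ f = pullback.snd f (D.refl y) ≫ D.refl y := pullback.condition
    have hsqσ : D.eta (m ≫ f) ≫ D.refl (m ≫ f) = pullback.snd f (D.refl y) ≫ D.refl y := by
      rw [D.fac, hcond]
    have hσ := fill_spec D (D.eta_mem (m ≫ f)) (D.refl_mem y)
      (pullback.snd f (D.refl y)) (D.refl (m ≫ f)) hsqσ
    set σ := fill D (D.eta_mem (m ≫ f)) (D.refl_mem y)
      (pullback.snd f (D.refl y)) (D.refl (m ≫ f)) hsqσ with hσdef
    obtain ⟨θ, ⟨hθ1, hθ2⟩, -⟩ := h2 y σ hσ.2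
    have hkcond : D.refl x ≫ f = (canMap D x f ≫ θ) ≫ D.refl y := by
      rw [Category.assoc, hθ1, canMap_comm]
    set k : D.mid x ⟶ pullback f (D.refl y) :=
      pullback.lift (D.refl x) (canMap D x f ≫ θ) hkcond with hkdef
    have hι := imageCone_spec D f m x lam hc
    have hk1 : lam ≫ k = 𝟙 (pullback f (D.refl y)) := by
      apply pullback.hom_ext
      · rw [Category.assoc, Category.id_comp]
        rw [hkdef, pullback.lift_fst, hc']
      · rw [Category.assoc, Category.id_comp]
        rw [hkdef, pullback.lift_snd, ← Category.assoc, ← hι.1,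
          Category.assoc, hθ2, hσ.1]
    have hk2 : k ≫ lam = 𝟙 (D.mid x) := by
      obtain ⟨θ₀, -, huniq⟩ := h1 x lam hc
      have e1 : k ≫ lam = θ₀ := huniq (k ≫ lam)
        ⟨by rw [Category.assoc, hc', hkdef, pullback.lift_fst],
         by rw [← Category.assoc, hk1, Category.id_comp]⟩
      have e2 : 𝟙 (D.mid x) = θ₀ := huniq (𝟙 (D.mid x))
        ⟨by rw [Category.id_comp], by rw [Category.comp_id]⟩
      rw [e1, e2]
    exact ⟨D.eta x ≫ k, E_comp_s13 D (D.eta_mem x) (E_of_inv D k lam hk2 hk1)⟩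
end

section
/- Let (E,M) be a factorization system on a finitely complete category C with terminal object 1, and let f: X → Y be adjunctible: for every point y: 1 → Y there exist a point x: 1 → X and an isomorphism Δ_f ν(y) ≅ ν(x) in C/X. Then f preserves colimits: for every m in M over X, every point x₀: 1 → X and every colimiting cone λ: m → ν(x₀), the image cone ∃_f λ: ∃_f m → ν(f ∘ x₀) is colimiting. -/
open CategoryTheory CategoryTheory.Limits

universe v u

variable {C : Type u} [Category.{v} C]

lemma diag_unique (D : FactorizationData C) {A B M₀ N : C} {e : A ⟶ B} {m : M₀ ⟶ N}
    (he : D.E e) (hm : D.M m) {w w' : B ⟶ M₀}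
    (h1 : e ≫ w = e ≫ w') (h2 : w ≫ m = w' ≫ m) : w = w' := by
  have horth : IsOrth e m := (D.E_eq ▸ he : leftOrth D.M e) m hm
  obtain ⟨z, _, hz⟩ := horth (e ≫ w) (w ≫ m) (by rw [Category.assoc])
  rw [hz w ⟨rfl, rfl⟩, hz w' ⟨h1.symm, h2.symm⟩]

lemma imageCone_eta [HasTerminal C] (D : FactorizationData C) {M₀ X Y : C}
    (f : X ⟶ Y) (m : M₀ ⟶ X) (x : ⊤_ C ⟶ X) (lam : M₀ ⟶ D.mid x)
    (hc : IsCone D m x lam) :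
    D.eta (m ≫ f) ≫ imageCone D f m x lam hc = lam ≫ canMap D x f :=
  (fill_spec D _ _ _ _ _).1

lemma imageCone_refl [HasTerminal C] (D : FactorizationData C) {M₀ X Y : C}
    (f : X ⟶ Y) (m : M₀ ⟶ X) (x : ⊤_ C ⟶ X) (lam : M₀ ⟶ D.mid x)
    (hc : IsCone D m x lam) :
    imageCone D f m x lam hc ≫ D.refl (x ≫ f) = D.refl (m ≫ f) :=
  (fill_spec D _ _ _ _ _).2

/-- if `f : X ⟶ Y` is adjunctible (for every point `y : 1 ⟶ Y` there is a point
`x : 1 ⟶ X` with `Δ_f ν(y) ≅ ν(x)` in `C/X`), then `f` preserves colimits: for every `m` in `M`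
over `X` and every colimiting cone `lam : m ⟶ ν(x₀)`, the image cone
`∃_f lam : ∃_f m ⟶ ν(f ∘ x₀)` is colimiting. -/
theorem adjunctible_preserves_colimits
    [HasFiniteLimits C] (D : FactorizationData C) {X Y : C} (f : X ⟶ Y)
    (hadj : ∀ y : ⊤_ C ⟶ Y, ∃ x : ⊤_ C ⟶ X,
      Nonempty ((Over.mk (pullback.fst f (D.refl y)) : Over X) ≅ Over.mk (D.refl x)))
    {M₀ : C} (m : M₀ ⟶ X) (hm : D.M m) (x₀ : ⊤_ C ⟶ X) (lam : M₀ ⟶ D.mid x₀)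
    (hc : IsCone D m x₀ lam) (hcolim : IsColimiting D m x₀ lam) :
    IsColimiting D (D.refl (m ≫ f)) (x₀ ≫ f) (imageCone D f m x₀ lam hc) := by
  intro y mu hmu
  obtain ⟨x, ⟨φ⟩⟩ := hadj y
  have hwhom : φ.hom.left ≫ D.refl x = pullback.fst f (D.refl y) := Over.w φ.hom
  have hwinv : φ.inv.left ≫ pullback.fst f (D.refl y) = D.refl x := Over.w φ.inv
  have hhi : φ.hom.left ≫ φ.inv.left = 𝟙 (pullback f (D.refl y)) := by
    rw [← Over.comp_left, φ.hom_inv_id]; rfl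
  have hmuY : mu ≫ D.refl y = D.refl (m ≫ f) := hmu
  have hksq : m ≫ f = (D.eta (m ≫ f) ≫ mu) ≫ D.refl y := by
    rw [Category.assoc, hmuY, D.fac]
  let k : M₀ ⟶ pullback f (D.refl y) := pullback.lift m (D.eta (m ≫ f) ≫ mu) hksq
  have hkfst : k ≫ pullback.fst f (D.refl y) = m := pullback.lift_fst _ _ _
  have hksnd : k ≫ pullback.snd f (D.refl y) = D.eta (m ≫ f) ≫ mu := pullback.lift_snd _ _ _
  let mu' : M₀ ⟶ D.mid x := k ≫ φ.hom.left
  have hmu' : IsCone D m x mu' := by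
    show (k ≫ φ.hom.left) ≫ D.refl x = m
    rw [Category.assoc, hwhom, hkfst]
  obtain ⟨θ₀, ⟨hθ₀r, hθ₀l⟩, hθ₀u⟩ := hcolim x mu' hmu'
  let ψ : D.mid x₀ ⟶ D.mid y := θ₀ ≫ φ.inv.left ≫ pullback.snd f (D.refl y)
  have hψ : ψ ≫ D.refl y = D.refl x₀ ≫ f := by
    show (θ₀ ≫ φ.inv.left ≫ pullback.snd f (D.refl y)) ≫ D.refl y = D.refl x₀ ≫ f
    have h' : φ.inv.left ≫ pullback.fst f (D.refl y) ≫ f = D.refl x ≫ f := by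
      rw [← Category.assoc, hwinv]
    rw [Category.assoc, Category.assoc, ← pullback.condition, h', ← Category.assoc, hθ₀r]
  have hsq : D.eta (x₀ ≫ f) ≫ D.refl (x₀ ≫ f) = (D.eta x₀ ≫ ψ) ≫ D.refl y := by
    rw [D.fac, Category.assoc, hψ, ← Category.assoc, D.fac]
  let θ : D.mid (x₀ ≫ f) ⟶ D.mid y :=
    fill D (D.eta_mem (x₀ ≫ f)) (D.refl_mem y) (D.eta x₀ ≫ ψ) (D.refl (x₀ ≫ f)) hsq
  have hθ1 : D.eta (x₀ ≫ f) ≫ θ = D.eta x₀ ≫ ψ := (fill_spec D _ _ _ _ _).1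
  have hθ2 : θ ≫ D.refl y = D.refl (x₀ ≫ f) := (fill_spec D _ _ _ _ _).2
  have hcθ : canMap D x₀ f ≫ θ = ψ := by
    refine diag_unique D (D.eta_mem x₀) (D.refl_mem y) ?_ ?_
    · rw [← Category.assoc, canMap_eta, hθ1]
    · rw [Category.assoc, hθ2, canMap_comm, hψ]
  have hlamψ : lam ≫ ψ = D.eta (m ≫ f) ≫ mu := by
    show lam ≫ θ₀ ≫ φ.inv.left ≫ pullback.snd f (D.refl y) = _
    rw [← Category.assoc, hθ₀l]
    show (k ≫ φ.hom.left) ≫ φ.inv.left ≫ pullback.snd f (D.refl y) = _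
    rw [Category.assoc, ← Category.assoc φ.hom.left, hhi, Category.id_comp (pullback.snd f (D.refl y)), hksnd]
  refine ⟨θ, ⟨hθ2, ?_⟩, ?_⟩
  · refine diag_unique D (D.eta_mem (m ≫ f)) (D.refl_mem y) ?_ ?_
    · rw [← Category.assoc, imageCone_eta, Category.assoc, hcθ, hlamψ]
    · rw [Category.assoc, hθ2, imageCone_refl, hmuY]
  · rintro θ' ⟨h1', h2'⟩
    have hg'sq : D.refl x₀ ≫ f = (canMap D x₀ f ≫ θ') ≫ D.refl y := by
      rw [Category.assoc, h1', canMap_comm]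
    let g' : D.mid x₀ ⟶ pullback f (D.refl y) :=
      pullback.lift (D.refl x₀) (canMap D x₀ f ≫ θ') hg'sq
    have hg'fst : g' ≫ pullback.fst f (D.refl y) = D.refl x₀ := pullback.lift_fst _ _ _
    have hg'snd : g' ≫ pullback.snd f (D.refl y) = canMap D x₀ f ≫ θ' := pullback.lift_snd _ _ _
    have hlamg' : lam ≫ g' = k := by
      apply pullback.hom_ext
      · rw [Category.assoc, hg'fst, hkfst, hc]
      · rw [Category.assoc, hg'snd, hksnd, ← Category.assoc, ← imageCone_eta D f m x₀ lam hc,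
          Category.assoc, h2']
    have hθ₀' : g' ≫ φ.hom.left = θ₀ := by
      refine hθ₀u _ ⟨?_, ?_⟩
      · rw [Category.assoc, hwhom, hg'fst]
      · show lam ≫ g' ≫ φ.hom.left = k ≫ φ.hom.left
        rw [← Category.assoc, hlamg']
    have hcθ' : canMap D x₀ f ≫ θ' = ψ := by
      rw [← hg'snd]
      show g' ≫ pullback.snd f (D.refl y) = θ₀ ≫ φ.inv.left ≫ pullback.snd f (D.refl y)
      rw [← hθ₀', Category.assoc, ← Category.assoc φ.hom.left, hhi, Category.id_comp (pullback.snd f (D.refl y))]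
    refine diag_unique D (D.eta_mem (x₀ ≫ f)) (D.refl_mem y) ?_ ?_
    · rw [hθ1, ← canMap_eta D x₀ f, Category.assoc, hcθ']
    · rw [hθ2, h1']
end

section
/- Let p: P ⥤ X and q: Q ⥤ X be functors between small categories. The discrete reflection presheaves ↓p and ↓q are naturally isomorphic if and only if for every functor f: X ⥤ Y into a small category Y and every object y of Y, y is a colimit of f ∘ p if and only if y is a colimit of f ∘ q. -/
open CategoryTheory CategoryTheory.Limits Opposite

universe u

/-- `y` is a colimit of `g` if there is a colimit cocone on `g` with vertex `y`. -/
def IsColimitObj {D Y : Type u} [SmallCategory D] [SmallCategory Y] (g : D ⥤ Y) (y : Y) :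
    Prop :=
  ∃ c : Cocone g, Nonempty (IsColimit c) ∧ c.pt = y

section Aux

lemma zigzag_constant {C : Type*} [Category C] {α : Sort*} (g : C → α)
    (h : ∀ {s t : C}, (s ⟶ t) → g s = g t) {s t : C} (hz : Zigzag s t) : g s = g t := by
  induction hz with
  | refl => rfl
  | tail _ hzag ih =>
    cases hzag with
    | inl h' => exact ih.trans (h h'.some)
    | inr h' => exact ih.trans (h h'.some).symm

variable {P Q X Y : Type u} [SmallCategory P] [SmallCategory Q] [SmallCategory X]
  [SmallCategory Y]

def descFun (p : P ⥤ X) (f : X ⥤ Y) {y : Y}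
    (c : (p ⋙ f) ⟶ (Functor.const P).obj y) {x : X} (t : StructuredArrow x p) :
    f.obj x ⟶ y :=
  f.map t.hom ≫ c.app t.right

lemma descFun_hom_eq (p : P ⥤ X) (f : X ⥤ Y) {y : Y}
    (c : (p ⋙ f) ⟶ (Functor.const P).obj y) {x : X} {s t : StructuredArrow x p}
    (k : s ⟶ t) : descFun p f c s = descFun p f c t := by
  have hn := c.naturality k.right
  simp only [Functor.comp_map, Functor.const_obj_map, Category.comp_id] at hn
  unfold descFun
  rw [← StructuredArrow.w k, f.map_comp, Category.assoc, hn]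
  simp

noncomputable def descend (p : P ⥤ X) (f : X ⥤ Y) {y : Y}
    (c : (p ⋙ f) ⟶ (Functor.const P).obj y) (x : X) :
    ConnectedComponents (StructuredArrow x p) → (f.obj x ⟶ y) :=
  Quotient.lift (descFun p f c)
    (fun _ _ hz => zigzag_constant (descFun p f c) (fun k => descFun_hom_eq p f c k) hz)

@[simp] lemma descend_mk (p : P ⥤ X) (f : X ⥤ Y) {y : Y}
    (c : (p ⋙ f) ⟶ (Functor.const P).obj y) (x : X) (t : StructuredArrow x p) :
    descend p f c x (Quotient.mk _ t) = f.map t.hom ≫ c.app t.right := rfl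

lemma descend_map (p : P ⥤ X) (f : X ⥤ Y) {y : Y}
    (c : (p ⋙ f) ⟶ (Functor.const P).obj y) {x x' : X} (g : x' ⟶ x)
    (t : ConnectedComponents (StructuredArrow x p)) :
    descend p f c x' ((reflPresheaf p).map g.op t) = f.map g ≫ descend p f c x t := by
  obtain ⟨t, rfl⟩ := Quotient.exists_rep t
  show descend p f c x' (Quotient.mk _ ((StructuredArrow.map g).obj t)) = _
  rw [descend_mk, descend_mk]
  show f.map (g ≫ t.hom) ≫ _ = _
  rw [f.map_comp, Category.assoc]
  rfl

lemma descend_postcomp (p : P ⥤ X) (f : X ⥤ Y) {y y' : Y}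
    (c : (p ⋙ f) ⟶ (Functor.const P).obj y) (g : y ⟶ y') (x : X)
    (t : ConnectedComponents (StructuredArrow x p)) :
    descend p f (c ≫ (Functor.const P).map g) x t = descend p f c x t ≫ g := by
  obtain ⟨t, rfl⟩ := Quotient.exists_rep t
  simp [descend_mk]

lemma refl_map_mk_id (q : Q ⥤ X) {b b' : Q} (k : b ⟶ b') :
    (reflPresheaf q).map (q.map k).op
        (Quotient.mk _ (StructuredArrow.mk (𝟙 (q.obj b'))))
      = Quotient.mk _ (StructuredArrow.mk (𝟙 (q.obj b))) := by
  show Quotient.mk _ ((StructuredArrow.map (q.map k)).obj (StructuredArrow.mk (𝟙 _))) = _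
  rw [StructuredArrow.map_mk, Category.comp_id]
  exact (Quotient.sound (Zigzag.of_hom (StructuredArrow.homMk k (by simp)))).symm

lemma refl_map_mk_eq_self (q : Q ⥤ X) {x : X} (s : StructuredArrow x q) :
    (reflPresheaf q).map s.hom.op
        (Quotient.mk _ (StructuredArrow.mk (𝟙 (q.obj s.right))))
      = Quotient.mk _ s := by
  show Quotient.mk _ ((StructuredArrow.map s.hom).obj (StructuredArrow.mk (𝟙 _))) = _
  rw [StructuredArrow.map_mk, Category.comp_id]
  exact congrArg _ (StructuredArrow.eq_mk s).symm

noncomputable def transfer (p : P ⥤ X) (q : Q ⥤ X) (f : X ⥤ Y) {y : Y}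
    (e : reflPresheaf q ⟶ reflPresheaf p)
    (c : (p ⋙ f) ⟶ (Functor.const P).obj y) : (q ⋙ f) ⟶ (Functor.const Q).obj y where
  app b := descend p f c _ (e.app (op (q.obj b))
    (Quotient.mk _ (StructuredArrow.mk (𝟙 (q.obj b)))))
  naturality b b' k := by
    simp only [Functor.const_obj_map, Category.comp_id, Functor.comp_map]
    erw [← descend_map p f c (q.map k)]
    have hnat := ConcreteCategory.congr_hom (e.naturality (q.map k).op)
      (Quotient.mk _ (StructuredArrow.mk (𝟙 (q.obj b'))))
    simp only [types_comp_apply] at hnat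
    erw [← hnat, comp_apply, refl_map_mk_id]
    simp

lemma descend_transfer (p : P ⥤ X) (q : Q ⥤ X) (f : X ⥤ Y) {y : Y}
    (e : reflPresheaf q ⟶ reflPresheaf p)
    (c : (p ⋙ f) ⟶ (Functor.const P).obj y) (x : X)
    (t : ConnectedComponents (StructuredArrow x q)) :
    descend q f (transfer p q f e c) x t = descend p f c x (e.app (op x) t) := by
  obtain ⟨s, rfl⟩ := Quotient.exists_rep t
  rw [descend_mk]
  show f.map s.hom ≫ descend p f c _ (e.app _ _) = _
  erw [← descend_map p f c s.hom]
  have hnat := ConcreteCategory.congr_hom (e.naturality s.hom.op)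
    (Quotient.mk _ (StructuredArrow.mk (𝟙 (q.obj s.right))))
  simp only [types_comp_apply] at hnat
  erw [← hnat, comp_apply, refl_map_mk_eq_self]

lemma transfer_transfer {R : Type u} [SmallCategory R] (p : P ⥤ X) (q : Q ⥤ X) (r : R ⥤ X)
    (f : X ⥤ Y) {y : Y} (e : reflPresheaf q ⟶ reflPresheaf p)
    (e' : reflPresheaf r ⟶ reflPresheaf q)
    (c : (p ⋙ f) ⟶ (Functor.const P).obj y) :
    transfer q r f e' (transfer p q f e c) = transfer p r f (e' ≫ e) c := by
  ext b
  show descend q f (transfer p q f e c) _ _ = _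
  erw [descend_transfer]
  rfl

lemma transfer_id (p : P ⥤ X) (f : X ⥤ Y) {y : Y}
    (c : (p ⋙ f) ⟶ (Functor.const P).obj y) :
    transfer p p f (𝟙 (reflPresheaf p)) c = c := by
  ext a
  show descend p f c _ (Quotient.mk _ (StructuredArrow.mk (𝟙 (p.obj a)))) = _
  rw [descend_mk]
  simp

lemma transfer_postcomp (p : P ⥤ X) (q : Q ⥤ X) (f : X ⥤ Y) {y y' : Y}
    (e : reflPresheaf q ⟶ reflPresheaf p)
    (c : (p ⋙ f) ⟶ (Functor.const P).obj y) (g : y ⟶ y') :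
    transfer p q f e (c ≫ (Functor.const P).map g)
      = transfer p q f e c ≫ (Functor.const Q).map g := by
  ext b
  show descend p f (c ≫ (Functor.const P).map g) _ _ = _
  erw [descend_postcomp]
  rfl

lemma forward_colim (p : P ⥤ X) (q : Q ⥤ X)
    (e : reflPresheaf p ≅ reflPresheaf q) (f : X ⥤ Y) (y : Y)
    (h : IsColimitObj (p ⋙ f) y) : IsColimitObj (q ⋙ f) y := by
  obtain ⟨c, ⟨hc⟩, rfl⟩ := h
  refine ⟨⟨c.pt, transfer p q f e.inv c.ι⟩, ⟨?_⟩, rfl⟩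
  refine { desc := fun s => hc.desc ⟨s.pt, transfer q p f e.hom s.ι⟩, fac := ?_, uniq := ?_ }
  · intro s b
    have h1 : c.ι ≫ (Functor.const P).map (hc.desc ⟨s.pt, transfer q p f e.hom s.ι⟩)
        = transfer q p f e.hom s.ι := by
      ext a
      exact hc.fac _ a
    calc (transfer p q f e.inv c.ι).app b ≫ _
        = (transfer p q f e.inv
            (c.ι ≫ (Functor.const P).map (hc.desc ⟨s.pt, transfer q p f e.hom s.ι⟩))).app b := by
          rw [transfer_postcomp]; rfl
      _ = (transfer q q f (e.inv ≫ e.hom) s.ι).app b := by rw [h1, transfer_transfer]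
      _ = s.ι.app b := by rw [e.inv_hom_id, transfer_id]
  · intro s m hm
    refine hc.uniq ⟨s.pt, transfer q p f e.hom s.ι⟩ m (fun a => ?_)
    have h2 : transfer p q f e.inv c.ι ≫ (Functor.const Q).map m = s.ι := by
      ext b; exact hm b
    have h3 : transfer q p f e.hom (transfer p q f e.inv c.ι ≫ (Functor.const Q).map m)
        = transfer q p f e.hom s.ι := by rw [h2]
    rw [← transfer_postcomp, transfer_transfer, e.hom_inv_id, transfer_id] at h3
    exact (congrFun (congrArg NatTrans.app h3.symm) a) ▸ rfl

end Aux

section Back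

variable {P Q X : Type u} [SmallCategory P] [SmallCategory Q] [SmallCategory X]

/-- Legs of the canonical cocone exhibiting `reflPresheaf r` as colimit of `r ⋙ yoneda`. -/
noncomputable def yLeg (r : P ⥤ X) (a : P) : yoneda.obj (r.obj a) ⟶ reflPresheaf r where
  app x := TypeCat.ofHom fun h => Quotient.mk _ (StructuredArrow.mk h)
  naturality x x' g := rfl

noncomputable def yCocone (r : P ⥤ X) : Cocone (r ⋙ yoneda) where
  pt := reflPresheaf r
  ι :=
    { app := yLeg r
      naturality := fun a a' k => by
        refine NatTrans.ext (funext fun x => ConcreteCategory.hom_ext _ _ fun h => ?_)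
        exact (Quotient.sound (Zigzag.of_hom
          (StructuredArrow.homMk k (by rfl)))).symm }

def yDescFun (r : P ⥤ X) (s : Cocone (r ⋙ yoneda)) (x : Xᵒᵖ)
    (t : StructuredArrow x.unop r) : s.pt.obj x :=
  (s.ι.app t.right).app x t.hom

lemma yDescFun_hom (r : P ⥤ X) (s : Cocone (r ⋙ yoneda)) (x : Xᵒᵖ)
    {t t' : StructuredArrow x.unop r} (k : t ⟶ t') :
    yDescFun r s x t = yDescFun r s x t' := by
  unfold yDescFun
  have hn := ConcreteCategory.congr_hom (congrFun (congrArg NatTrans.app (s.ι.naturality k.right)) x) t.hom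
  rw [← StructuredArrow.w k]
  exact hn.symm

noncomputable def yIsColimit (r : P ⥤ X) : IsColimit (yCocone r) where
  desc s :=
    { app := fun x => TypeCat.ofHom (Quotient.lift (yDescFun r s x)
        (fun _ _ hz => zigzag_constant (yDescFun r s x) (fun k => yDescFun_hom r s x k) hz))
      naturality := fun x x' g => by
        refine ConcreteCategory.hom_ext _ _ fun t => ?_
        obtain ⟨t, rfl⟩ := Quotient.exists_rep t
        show (s.ι.app t.right).app x' (g.unop ≫ t.hom)
          = s.pt.map g ((s.ι.app t.right).app x t.hom)
        exact ConcreteCategory.congr_hom ((s.ι.app t.right).naturality g) t.hom }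
  fac s a := NatTrans.ext (funext fun x => ConcreteCategory.hom_ext _ _ fun h => rfl)
  uniq s m hm := by
    refine NatTrans.ext (funext fun x => ConcreteCategory.hom_ext _ _ fun t => ?_)
    obtain ⟨t, rfl⟩ := Quotient.exists_rep t
    rw [show (Quotient.mk _ t : CategoryTheory.ConnectedComponents _)
      = Quotient.mk _ (StructuredArrow.mk t.hom) from congrArg _ (StructuredArrow.eq_mk t)]
    exact ConcreteCategory.congr_hom (congrFun (congrArg NatTrans.app (hm t.right)) x) t.hom

/-- The ambient small category: representables together with `reflPresheaf p` and
`reflPresheaf q`. -/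
noncomputable def AmbObj (p : P ⥤ X) (q : Q ⥤ X) : Sum X Bool → (Xᵒᵖ ⥤ Type u) :=
  Sum.elim yoneda.obj (fun b => bif b then reflPresheaf q else reflPresheaf p)

noncomputable abbrev Amb (p : P ⥤ X) (q : Q ⥤ X) := InducedCategory (Xᵒᵖ ⥤ Type u) (AmbObj p q)

noncomputable def ambF (p : P ⥤ X) (q : Q ⥤ X) : X ⥤ Amb p q where
  obj x := Sum.inl x
  map g := InducedCategory.homMk (yoneda.map g)
  map_id x := InducedCategory.hom_ext (yoneda.map_id x)
  map_comp g h := InducedCategory.hom_ext (yoneda.map_comp g h)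

noncomputable def coconeP (p : P ⥤ X) (q : Q ⥤ X) : Cocone (p ⋙ ambF p q) where
  pt := Sum.inr false
  ι :=
    { app := fun a => InducedCategory.homMk (yLeg p a)
      naturality := fun a a' k => InducedCategory.hom_ext ((yCocone p).ι.naturality k) }

noncomputable def coconeQ (p : P ⥤ X) (q : Q ⥤ X) : Cocone (q ⋙ ambF p q) where
  pt := Sum.inr true
  ι :=
    { app := fun a => InducedCategory.homMk (yLeg q a)
      naturality := fun a a' k => InducedCategory.hom_ext ((yCocone q).ι.naturality k) }

noncomputable def isColimitCoconeP (p : P ⥤ X) (q : Q ⥤ X) : IsColimit (coconeP p q) := by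
  have : ReflectsColimits (inducedFunctor (AmbObj p q)) := inferInstance
  exact isColimitOfReflects (inducedFunctor (AmbObj p q)) (yIsColimit p)

noncomputable def isColimitCoconeQ (p : P ⥤ X) (q : Q ⥤ X) : IsColimit (coconeQ p q) := by
  have : ReflectsColimits (inducedFunctor (AmbObj p q)) := inferInstance
  exact isColimitOfReflects (inducedFunctor (AmbObj p q)) (yIsColimit q)

end Back


/-- for functors `p : P ⥤ X`, `q : Q ⥤ X` between small categories, the discrete
reflection presheaves `↓p` and `↓q` are naturally isomorphic iff for every functor
`f : X ⥤ Y` into a small category and every object `y` of `Y`, `y` is a colimit of `f ∘ p`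
iff it is a colimit of `f ∘ q`. -/
theorem reflection_iso_iff_same_colimits {P Q X : Type u}
    [SmallCategory P] [SmallCategory Q] [SmallCategory X] (p : P ⥤ X) (q : Q ⥤ X) :
    Nonempty (reflPresheaf p ≅ reflPresheaf q) ↔
      ∀ (Y : Type u) [SmallCategory Y] (f : X ⥤ Y) (y : Y),
        IsColimitObj (p ⋙ f) y ↔ IsColimitObj (q ⋙ f) y := by
  constructor
  · rintro ⟨e⟩ Y _ f y
    exact ⟨forward_colim p q e f y, forward_colim q p e.symm f y⟩
  · intro h
    have h1 : IsColimitObj (p ⋙ ambF p q) (Sum.inr false) :=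
      ⟨coconeP p q, ⟨isColimitCoconeP p q⟩, rfl⟩
    obtain ⟨c₂, ⟨hc₂⟩, hpt⟩ :=
      (h (InducedCategory (Xᵒᵖ ⥤ Type u) (AmbObj p q)) (ambF p q) (Sum.inr false)).mp h1
    have i := IsColimit.coconePointUniqueUpToIso hc₂ (isColimitCoconeQ p q)
    rw [hpt] at i
    exact ⟨(inducedFunctor (AmbObj p q)).mapIso i⟩
end

section
/- Let p: P ⥤ X be a functor between small categories and x an object of X. The discrete reflection presheaf ↓p is naturally isomorphic to the representable presheaf Hom_X(−, x) (i.e. x is the absolute colimit of p) if and only if for every functor f: X ⥤ Y into a small category Y, the object f x is a colimit of f ∘ p. -/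
open CategoryTheory CategoryTheory.Limits

universe u

/-- Lift a hom-invariant function on objects along zigzags. -/
lemma zigzag_lift {C : Type*} [Category C] {β : Sort*} (F : C → β)
    (h1 : ∀ {a b : C}, (a ⟶ b) → F a = F b) {a b : C} (h : Zigzag a b) : F a = F b := by
  induction h with
  | refl => rfl
  | tail _ hz ih =>
    cases hz with
    | inl hk => obtain ⟨k⟩ := hk; exact ih.trans (h1 k)
    | inr hk => obtain ⟨k⟩ := hk; exact ih.trans (h1 k).symm

section Aux

variable {P X : Type u} [SmallCategory P] [SmallCategory X] (p : P ⥤ X)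

lemma reflPresheaf_map_mk {z z' : X} (g : z' ⟶ z) (s : StructuredArrow z p) :
    (reflPresheaf p).map g.op (Quotient.mk _ s) =
      Quotient.mk _ ((StructuredArrow.map g).obj s) := rfl

variable {Y : Type u} [SmallCategory Y] (f : X ⥤ Y) (d : Cocone (p ⋙ f))

/-- descend a cocone on `p ⋙ f` to a family of maps out of the reflection presheaf. -/
noncomputable def ccDesc (z : X) :
    (reflPresheaf p).obj (Opposite.op z) → (f.obj z ⟶ d.pt) :=
  Quotient.lift (fun s : StructuredArrow z p => f.map s.hom ≫ d.ι.app s.right)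
    (fun s t h => by
      refine zigzag_lift (fun s : StructuredArrow z p => f.map s.hom ≫ d.ι.app s.right)
        (fun {a b} k => ?_) h
      have hw := d.w k.right
      dsimp only [Functor.comp_map] at hw ⊢
      rw [← hw, ← Category.assoc, ← f.map_comp, StructuredArrow.w k])

lemma ccDesc_mk {z : X} (s : StructuredArrow z p) :
    ccDesc p f d z (Quotient.mk _ s) = f.map s.hom ≫ d.ι.app s.right := rfl

lemma ccDesc_natural {z z' : X} (g : z' ⟶ z) (c : (reflPresheaf p).obj (Opposite.op z)) :
    ccDesc p f d z' ((reflPresheaf p).map g.op c) = f.map g ≫ ccDesc p f d z c := by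
  obtain ⟨s, rfl⟩ := Quotient.exists_rep c
  obtain ⟨a, h, rfl⟩ := StructuredArrow.mk_surjective s
  rw [reflPresheaf_map_mk, StructuredArrow.map_mk, ccDesc_mk, ccDesc_mk]
  simp

end Aux

section Backward

variable {P X : Type u} [SmallCategory P] [SmallCategory X] (p : P ⥤ X)

/-- The canonical cocone legs `yoneda (p a) ⟶ ↓p`. -/
noncomputable def canonicalLeg (a : P) : yoneda.obj (p.obj a) ⟶ reflPresheaf p where
  app z := TypeCat.ofHom fun g => Quotient.mk _ (StructuredArrow.mk (Y := a) g)
  naturality z z' g := by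
    ext h
    exact congrArg (Quotient.mk _) (StructuredArrow.map_mk g.unop).symm

lemma canonicalLeg_w {a a' : P} (k : a ⟶ a') :
    canonicalLeg p a = yoneda.map (p.map k) ≫ canonicalLeg p a' := by
  ext z g
  exact Quotient.sound (Zigzag.of_hom (StructuredArrow.homMk k (by simp; rfl)))

/-- `↓p` is the colimit of `yoneda ∘ p` among presheaves: construction of the descent map. -/
noncomputable def canonicalDesc {G : Xᵒᵖ ⥤ Type u}
    (leg : ∀ a : P, yoneda.obj (p.obj a) ⟶ G)
    (hw : ∀ {a a' : P} (k : a ⟶ a'), leg a = yoneda.map (p.map k) ≫ leg a') :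
    reflPresheaf p ⟶ G where
  app z := TypeCat.ofHom <| Quotient.lift (fun s : StructuredArrow z.unop p => (leg s.right).app z s.hom)
    (fun s t h => by
      refine zigzag_lift
        (fun s : StructuredArrow z.unop p => (leg s.right).app z s.hom)
        (fun {b c} k => ?_) h
      show (leg b.right).app z b.hom = (leg c.right).app z c.hom
      rw [hw k.right]
      have hbc : b.hom ≫ p.map k.right = c.hom := StructuredArrow.w k
      simp only [FunctorToTypes.comp]
      rw [← hbc]
      rfl)
  naturality z z' g := by
    refine ConcreteCategory.hom_ext _ _ fun c => ?_
    obtain ⟨s, rfl⟩ := Quotient.exists_rep c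
    obtain ⟨a, h, rfl⟩ := StructuredArrow.mk_surjective s
    simp only [types_comp_apply]
    have h1 : (reflPresheaf p).map g (Quotient.mk _ (StructuredArrow.mk h)) =
        Quotient.mk _ (StructuredArrow.mk (g.unop ≫ h)) := by
      show Quotient.mk _ ((StructuredArrow.map g.unop).obj (StructuredArrow.mk h)) = _
      rw [StructuredArrow.map_mk]
    show (leg a).app z' (g.unop ≫ h) = G.map g ((leg a).app z h)
    have h2 := ConcreteCategory.congr_hom ((leg a).naturality g) h
    simp only [types_comp_apply] at h2
    have h3 : (yoneda.obj (p.obj a)).map g h = g.unop ≫ h := rfl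
    rw [h3] at h2
    exact h2

lemma canonicalDesc_fac {G : Xᵒᵖ ⥤ Type u}
    (leg : ∀ a : P, yoneda.obj (p.obj a) ⟶ G)
    (hw : ∀ {a a' : P} (k : a ⟶ a'), leg a = yoneda.map (p.map k) ≫ leg a') (a : P) :
    canonicalLeg p a ≫ canonicalDesc p leg hw = leg a := rfl

end Backward

/-- for a functor `p : P ⥤ X` between small categories and an object `x` of `X`,
the discrete reflection presheaf `↓p` is naturally isomorphic to the representable presheaf
`Hom_X(-, x)` (i.e. `x` is the absolute colimit of `p`) iff for every functor `f : X ⥤ Y`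
into a small category, `f x` is a colimit of `f ∘ p`. -/
theorem absolute_colimit_iff_representable {P X : Type u}
    [SmallCategory P] [SmallCategory X] (p : P ⥤ X) (x : X) :
    Nonempty (reflPresheaf p ≅ yoneda.obj x) ↔
      ∀ (Y : Type u) [SmallCategory Y] (f : X ⥤ Y), IsColimitObj (p ⋙ f) (f.obj x) := by
  constructor
  · rintro ⟨φ⟩ Y _ f
    -- the legs of the canonical cocone on `p` with vertex `x`
    let ε : ∀ a : P, p.obj a ⟶ x :=
      fun a => φ.hom.app (Opposite.op (p.obj a))
        (Quotient.mk _ (StructuredArrow.mk (𝟙 (p.obj a))))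
    have key : ∀ {z : X} (a : P) (h : z ⟶ p.obj a),
        φ.hom.app (Opposite.op z) (Quotient.mk _ (StructuredArrow.mk h)) = h ≫ ε a := by
      intro z a h
      have hnat := ConcreteCategory.congr_hom (φ.hom.naturality h.op)
        (Quotient.mk _ (StructuredArrow.mk (𝟙 (p.obj a))) : (reflPresheaf p).obj (Opposite.op (p.obj a)))
      simp only [types_comp_apply] at hnat
      erw [types_comp_apply, types_comp_apply, reflPresheaf_map_mk, StructuredArrow.map_mk, Category.comp_id] at hnat
      rw [hnat]
      rfl
    have cocone_w : ∀ {a a' : P} (k : a ⟶ a'), p.map k ≫ ε a' = ε a := by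
      intro a a' k
      have h1 := key a' (p.map k)
      have h0 : (Quotient.mk (Zigzag.setoid _) (StructuredArrow.mk (𝟙 (p.obj a))) :
            ConnectedComponents (StructuredArrow (p.obj a) p)) =
          Quotient.mk _ (StructuredArrow.mk (Y := a') (p.map k)) :=
        Quotient.sound (Zigzag.of_hom (StructuredArrow.homMk k (by simp)))
      rw [← h1, ← h0]
    -- the cocone on `p ⋙ f` with vertex `f x`
    refine ⟨⟨f.obj x, ⟨fun a => f.map (ε a), ?_⟩⟩, ⟨?_⟩, rfl⟩
    · intro a a' k
      dsimp
      rw [← f.map_comp, cocone_w k, Category.comp_id]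
    · refine ⟨fun d => ccDesc p f d x (φ.inv.app (Opposite.op x) (𝟙 x)), ?_, ?_⟩
      · intro d a
        dsimp
        rw [← ccDesc_natural p f d (ε a)]
        have hinv : (reflPresheaf p).map (ε a).op (φ.inv.app (Opposite.op x) (𝟙 x)) =
            Quotient.mk _ (StructuredArrow.mk (𝟙 (p.obj a))) := by
          have hnat := ConcreteCategory.congr_hom (φ.inv.naturality (ε a).op) (𝟙 x)
          simp only [types_comp_apply] at hnat
          have h2 : (yoneda.obj x).map (ε a).op (𝟙 x) = ε a := by simp
          rw [h2] at hnat
          rw [← hnat]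
          exact ConcreteCategory.congr_hom (φ.hom_inv_id_app (Opposite.op (p.obj a))) _
        rw [hinv, ccDesc_mk]
        simp
      · intro d m hm
        obtain ⟨s₀, hs₀⟩ := Quotient.exists_rep (φ.inv.app (Opposite.op x) (𝟙 x))
        obtain ⟨a₀, h₀, rfl⟩ := StructuredArrow.mk_surjective s₀
        have h1 : h₀ ≫ ε a₀ = 𝟙 x := by
          rw [← key a₀ h₀, hs₀]
          exact ConcreteCategory.congr_hom (φ.inv_hom_id_app (Opposite.op x)) (𝟙 x)
        show m = ccDesc p f d x (φ.inv.app (Opposite.op x) (𝟙 x))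
        rw [← hs₀, ccDesc_mk]
        simp only [StructuredArrow.mk_right, StructuredArrow.mk_hom_eq_self]
        rw [← hm a₀]
        dsimp
        rw [← Category.assoc, ← f.map_comp, h1, f.map_id, Category.id_comp]
  · intro H
    -- form the small full subcategory of presheaves on the image of yoneda and `↓p`
    let F : (X ⊕ PUnit.{u + 1}) → (Xᵒᵖ ⥤ Type u) :=
      Sum.elim yoneda.obj (fun _ => reflPresheaf p)
    let Y := InducedCategory (Xᵒᵖ ⥤ Type u) F
    let f : X ⥤ Y :=
      { obj := fun z => Sum.inl z
        map := fun g => InducedCategory.homMk (yoneda.map g)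
        map_id := fun z => InducedCategory.hom_ext (yoneda.map_id z)
        map_comp := fun g h => InducedCategory.hom_ext (yoneda.map_comp g h) }
    -- the canonical colimit cocone on `p ⋙ f` with vertex `↓p`
    let σ : Cocone (p ⋙ f) :=
      { pt := Sum.inr PUnit.unit
        ι :=
          { app := fun a => InducedCategory.homMk
              (canonicalLeg p a : F (Sum.inl (p.obj a)) ⟶ F (Sum.inr ⟨⟩))
            naturality := fun a a' k => InducedCategory.hom_ext <| by
              dsimp
              rw [Category.comp_id]
              exact (canonicalLeg_w p k).symm } }
    have hσ : IsColimit σ := by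
      refine ⟨fun d => InducedCategory.homMk (canonicalDesc p (fun a => (d.ι.app a).hom) ?_),
        fun d a => InducedCategory.hom_ext (canonicalDesc_fac p (G := F d.pt) (fun a => (d.ι.app a).hom)
          (fun k => congrArg InducedCategory.Hom.hom (d.w k).symm) a), ?_⟩
      · intro a a' k
        exact congrArg InducedCategory.Hom.hom (d.w k).symm
      · intro d m hm
        apply InducedCategory.hom_ext
        ext z c
        obtain ⟨s, rfl⟩ := Quotient.exists_rep c
        obtain ⟨a, h, rfl⟩ := StructuredArrow.mk_surjective s
        exact ConcreteCategory.congr_hom (congrArg (fun t => NatTrans.app t.hom z) (hm a)) h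
    obtain ⟨c, ⟨hc⟩, hpt⟩ := H Y f
    exact ⟨((inducedFunctor F).mapIso ((eqToIso hpt.symm).trans
      (hc.coconePointUniqueUpToIso hσ))).symm⟩
end
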